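/- arXiv:2510.08314 — 2 statements merged into one kernel-verified Lean document; each statement's English description precedes it below -/
import Mathlib

section
/- Let Z be a real-valued random variable and β ∈ (0,1). Define τ* = inf{λ ≥ 0 : P(Z > λ) ≤ β}. If the CDF of Z is continuous, then among all selection functions s taking values in {0,1} with E[s] ≤ β, the function s*(x) = 1{Z(x) > τ*} satisfies the budget constraint E[s*] ≤ β and minimizes E[(1−s)·A + s·B] pointwise-linearly, where A, B are the conditional risks with B − A = −Z; i.e., s* maximizes E[s·Z] subject to E[s] ≤ β. -/
open MeasureTheory

/-- Optimal budgeted selection (Theorem 1 core): if `Z` (the conditional risk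
gap) has a continuous (atomless) distribution, then the hard threshold
`s*(x) = 1{Z x > τ*}` at `τ* = inf {λ ≥ 0 : P(Z > λ) ≤ β}` satisfies the budget
constraint `E[s*] ≤ β` and maximizes `E[s·Z]` among all {0,1}-valued measurable
selectors `s` with `E[s] ≤ β`. -/
theorem optimal_budgeted_selector
    {X : Type*} [MeasurableSpace X] (μ : Measure X) [IsProbabilityMeasure μ]
    (Z : X → ℝ) (hZ : Measurable Z) (hZint : Integrable Z μ)
    (hcont : ∀ t : ℝ, μ {x | Z x = t} = 0)
    (β : ℝ) (hβ : β ∈ Set.Ioo (0 : ℝ) 1)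
    (τ : ℝ) (hτ : τ = sInf {l : ℝ | 0 ≤ l ∧ (μ {x | Z x > l}).toReal ≤ β}) :
    (μ {x | Z x > τ}).toReal ≤ β ∧
    ∀ s : X → ℝ, Measurable s → (∀ x, s x = 0 ∨ s x = 1) →
      (∫ x, s x ∂μ) ≤ β →
      ∫ x, s x * Z x ∂μ ≤ ∫ x, (if Z x > τ then (1 : ℝ) else 0) * Z x ∂μ := by
  obtain ⟨hβ0, hβ1⟩ := hβ
  set S : Set ℝ := {l : ℝ | 0 ≤ l ∧ (μ {x | Z x > l}).toReal ≤ β} with hS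
  have hmeas : ∀ l : ℝ, MeasurableSet {x | Z x > l} := fun l =>
    measurableSet_lt measurable_const hZ
  have hne : ∀ l : ℝ, μ {x | Z x > l} ≠ ⊤ := fun l => measure_ne_top μ _
  -- S is nonempty
  have hSne : S.Nonempty := by
    have hA : Antitone (fun n : ℕ => {x | Z x > (n : ℝ)}) := by
      intro m n hmn x hx
      simp only [Set.mem_setOf_eq] at hx ⊢
      have h1 : (m : ℝ) ≤ (n : ℝ) := Nat.cast_le.mpr hmn
      linarith
    have hiInter : (⋂ n : ℕ, {x | Z x > (n : ℝ)}) = ∅ := by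
      ext x
      simp only [Set.mem_iInter, Set.mem_setOf_eq, Set.mem_empty_iff_false, iff_false]
      push_neg
      obtain ⟨n, hn⟩ := exists_nat_gt (Z x)
      exact ⟨n, hn.le⟩
    have htend := tendsto_measure_iInter_atTop (μ := μ)
      (fun n : ℕ => (hmeas (n : ℝ)).nullMeasurableSet) hA ⟨0, measure_ne_top μ _⟩
    rw [hiInter, measure_empty] at htend
    have hev := htend.eventually_lt_const (show (0:ENNReal) < ENNReal.ofReal β by
      simpa using hβ0)
    obtain ⟨n, hn⟩ := hev.exists
    exact ⟨(n : ℝ), ⟨Nat.cast_nonneg n,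
      (ENNReal.le_ofReal_iff_toReal_le (measure_ne_top μ _) hβ0.le).mp hn.le⟩⟩
  have hbdd : BddBelow S := ⟨0, fun l hl => hl.1⟩
  have hτ0 : 0 ≤ τ := hτ ▸ le_csInf hSne (fun l hl => hl.1)
  -- Part 1 : μ {Z > τ} ≤ β  (via right approximation)
  have hpart1' : μ {x | Z x > τ} ≤ ENNReal.ofReal β := by
    have hU : {x | Z x > τ} = ⋃ n : ℕ, {x | Z x > τ + 1 / ((n : ℝ) + 1)} := by
      ext x
      simp only [Set.mem_setOf_eq, Set.mem_iUnion]
      constructor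
      · intro hx
        obtain ⟨n, hn⟩ := exists_nat_one_div_lt (sub_pos.mpr hx)
        exact ⟨n, by linarith⟩
      · rintro ⟨n, hn⟩
        have : (0:ℝ) < 1 / ((n : ℝ) + 1) := by positivity
        linarith
    have hmono : Monotone (fun n : ℕ => {x | Z x > τ + 1 / ((n : ℝ) + 1)}) := by
      intro m n hmn x hx
      simp only [Set.mem_setOf_eq] at hx ⊢
      have h1 : 1 / ((n : ℝ) + 1) ≤ 1 / ((m : ℝ) + 1) := by
        gcongr
      linarith
    rw [hU, hmono.directed_le.measure_iUnion (μ := μ)]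
    apply iSup_le
    intro n
    have hpos : (0:ℝ) < 1 / ((n : ℝ) + 1) := by positivity
    have hlt : τ < τ + 1 / ((n : ℝ) + 1) := by linarith
    have hlt' : sInf S < τ + 1 / ((n : ℝ) + 1) := by rw [← hτ]; exact hlt
    obtain ⟨l, hlS, hl⟩ := (csInf_lt_iff hbdd hSne).mp hlt'
    have hsub : {x | Z x > τ + 1 / ((n : ℝ) + 1)} ⊆ {x | Z x > l} := by
      intro x hx
      simp only [Set.mem_setOf_eq] at hx ⊢
      linarith
    calc μ {x | Z x > τ + 1 / ((n : ℝ) + 1)} ≤ μ {x | Z x > l} := measure_mono hsub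
      _ ≤ ENNReal.ofReal β := (ENNReal.le_ofReal_iff_toReal_le (hne _) hβ0.le).mpr hlS.2
  have hpart1 : (μ {x | Z x > τ}).toReal ≤ β :=
    (ENNReal.le_ofReal_iff_toReal_le (hne _) hβ0.le).mp hpart1'
  refine ⟨hpart1, ?_⟩
  -- Part 2
  -- auxiliary: if τ > 0 then β ≤ μ {Z > τ}
  have hlower : 0 < τ → ENNReal.ofReal β ≤ μ {x | Z x > τ} := by
    intro hτpos
    -- left approximation: l n = τ - τ/(n+1)
    set B : ℕ → Set X := fun n => {x | Z x > τ - τ / ((n : ℝ) + 1)} with hB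
    have hBanti : Antitone B := by
      intro m n hmn x hx
      simp only [hB, Set.mem_setOf_eq] at hx ⊢
      have h1 : τ / ((n : ℝ) + 1) ≤ τ / ((m : ℝ) + 1) := by
        gcongr
      linarith
    have hBint : (⋂ n, B n) = {x | Z x ≥ τ} := by
      ext x
      simp only [hB, Set.mem_iInter, Set.mem_setOf_eq]
      constructor
      · intro hx
        by_contra hlt
        push_neg at hlt
        obtain ⟨n, hn⟩ := exists_nat_one_div_lt (show 0 < (τ - Z x) / τ by
          exact div_pos (by linarith) hτpos)
        have := hx n
        have h2 : τ / ((n : ℝ) + 1) = τ * (1 / ((n : ℝ) + 1)) := by ring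
        have h3 : τ * (1 / ((n : ℝ) + 1)) < τ * ((τ - Z x) / τ) :=
          mul_lt_mul_of_pos_left hn hτpos
        rw [mul_div_cancel₀ _ (ne_of_gt hτpos)] at h3
        rw [h2] at this
        linarith
      · intro hx n
        have hpos : (0:ℝ) < τ / ((n : ℝ) + 1) := by positivity
        linarith
    have hBlow : ∀ n, ENNReal.ofReal β ≤ μ (B n) := by
      intro n
      have hl0 : 0 ≤ τ - τ / ((n : ℝ) + 1) := by
        have h1 : (1:ℝ) ≤ (n : ℝ) + 1 := by
          have := Nat.cast_nonneg (α := ℝ) n; linarith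
        have := div_le_self hτ0 h1
        linarith
      have hllt : τ - τ / ((n : ℝ) + 1) < τ := by
        have : (0:ℝ) < τ / ((n : ℝ) + 1) := by positivity
        linarith
      have hnotS : τ - τ / ((n : ℝ) + 1) ∉ S := by
        intro hmem
        have := csInf_le hbdd hmem
        rw [← hτ] at this
        linarith
      have : β < (μ (B n)).toReal := by
        by_contra h
        push_neg at h
        exact hnotS ⟨hl0, h⟩
      calc ENNReal.ofReal β ≤ ENNReal.ofReal (μ (B n)).toReal :=
            ENNReal.ofReal_le_ofReal this.le
        _ = μ (B n) := ENNReal.ofReal_toReal (hne _)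
    have htend := tendsto_measure_iInter_atTop (μ := μ)
      (fun n => (hmeas _).nullMeasurableSet) hBanti ⟨0, hne _⟩
    rw [hBint] at htend
    have hge : ENNReal.ofReal β ≤ μ {x | Z x ≥ τ} :=
      ge_of_tendsto htend (Filter.Eventually.of_forall hBlow)
    -- μ {Z ≥ τ} = μ {Z > τ} by atomlessness
    have heq : μ {x | Z x ≥ τ} = μ {x | Z x > τ} := by
      apply le_antisymm
      · have hsub : {x | Z x ≥ τ} ⊆ {x | Z x > τ} ∪ {x | Z x = τ} := by
          intro x hx
          simp only [Set.mem_setOf_eq, Set.mem_union] at hx ⊢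
          rcases lt_or_eq_of_le hx with h | h
          · exact Or.inl h
          · exact Or.inr h.symm
        calc μ {x | Z x ≥ τ} ≤ μ ({x | Z x > τ} ∪ {x | Z x = τ}) := measure_mono hsub
          _ ≤ μ {x | Z x > τ} + μ {x | Z x = τ} := measure_union_le _ _
          _ = μ {x | Z x > τ} := by rw [hcont τ, add_zero]
      · exact measure_mono (fun x (hx : Z x > τ) => le_of_lt hx)
    rwa [heq] at hge
  intro s hs hs01 hsβ
  set sstar : X → ℝ := fun x => if Z x > τ then (1 : ℝ) else 0 with hsstar
  have hsstar_eq : sstar = Set.indicator {x | Z x > τ} 1 := by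
    funext x
    simp only [hsstar, Set.indicator, Set.mem_setOf_eq, Pi.one_apply]
  have hsstar_meas : Measurable sstar := by
    rw [hsstar_eq]
    exact (measurable_const.indicator (hmeas τ))
  have hsstar_int : ∫ x, sstar x ∂μ = (μ {x | Z x > τ}).toReal := by
    rw [hsstar_eq]
    exact integral_indicator_one (hmeas τ)
  -- integrability facts
  have hs_bd : ∀ x, ‖s x‖ ≤ 1 := by
    intro x; rcases hs01 x with h | h <;> simp [h]
  have hsstar_bd : ∀ x, ‖sstar x‖ ≤ 1 := by
    intro x; simp only [hsstar]; split <;> simp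
  have hs_integrable : Integrable s μ :=
    (integrable_const (1:ℝ)).mono' hs.aestronglyMeasurable
      (Filter.Eventually.of_forall hs_bd)
  have hsstar_integrable : Integrable sstar μ :=
    (integrable_const (1:ℝ)).mono' hsstar_meas.aestronglyMeasurable
      (Filter.Eventually.of_forall hsstar_bd)
  have hsZ_integrable : Integrable (fun x => s x * Z x) μ := by
    apply hZint.norm.mono' ((hs.mul hZ).aestronglyMeasurable)
    apply Filter.Eventually.of_forall
    intro x
    rw [Pi.mul_apply, norm_mul]
    calc ‖s x‖ * ‖Z x‖ ≤ 1 * ‖Z x‖ := mul_le_mul_of_nonneg_right (hs_bd x) (norm_nonneg _)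
      _ = ‖Z x‖ := one_mul _
  have hsstarZ_integrable : Integrable (fun x => sstar x * Z x) μ := by
    apply hZint.norm.mono' ((hsstar_meas.mul hZ).aestronglyMeasurable)
    apply Filter.Eventually.of_forall
    intro x
    rw [Pi.mul_apply, norm_mul]
    calc ‖sstar x‖ * ‖Z x‖ ≤ 1 * ‖Z x‖ :=
          mul_le_mul_of_nonneg_right (hsstar_bd x) (norm_nonneg _)
      _ = ‖Z x‖ := one_mul _
  -- key inequality: ∫ (sstar - s)(Z - τ) ≥ 0
  have hg_nonneg : ∀ x, 0 ≤ (sstar x - s x) * (Z x - τ) := by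
    intro x
    by_cases hx : Z x > τ
    · apply mul_nonneg
      · have : sstar x = 1 := by simp [hsstar, hx]
        rcases hs01 x with h | h <;> rw [this, h] <;> norm_num
      · linarith
    · have h1 : sstar x - s x ≤ 0 := by
        have : sstar x = 0 := by simp [hsstar, hx]
        rcases hs01 x with h | h <;> rw [this, h] <;> norm_num
      have h2 : Z x - τ ≤ 0 := by push_neg at hx; linarith
      nlinarith
  have hg_int : 0 ≤ ∫ x, (sstar x - s x) * (Z x - τ) ∂μ :=
    integral_nonneg hg_nonneg
  -- expand the integral
  have hexpand : ∫ x, (sstar x - s x) * (Z x - τ) ∂μ =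
      (∫ x, sstar x * Z x ∂μ) - (∫ x, s x * Z x ∂μ)
      - τ * ((∫ x, sstar x ∂μ) - (∫ x, s x ∂μ)) := by
    have h1 : (fun x => (sstar x - s x) * (Z x - τ)) =
        fun x => (sstar x * Z x - s x * Z x) - τ * (sstar x - s x) := by
      funext x; ring
    have hi1 : Integrable (fun x => sstar x * Z x - s x * Z x) μ := by
      exact hsstarZ_integrable.sub hsZ_integrable
    have hi2 : Integrable (fun x => τ * (sstar x - s x)) μ := by
      exact (hsstar_integrable.sub hs_integrable).const_mul τ
    have hi3 : Integrable (fun x => sstar x - s x) μ := by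
      exact hsstar_integrable.sub hs_integrable
    rw [h1, integral_sub hi1 hi2, integral_sub hsstarZ_integrable hsZ_integrable,
      integral_const_mul, integral_sub hsstar_integrable hs_integrable]
  -- budget comparison: ∫ s ≤ ∫ sstar when τ > 0
  have hbudget : 0 ≤ τ * ((∫ x, sstar x ∂μ) - (∫ x, s x ∂μ)) := by
    rcases eq_or_lt_of_le hτ0 with h0 | hτpos
    · rw [← h0, zero_mul]
    · apply mul_nonneg hτ0
      have h1 : β ≤ (μ {x | Z x > τ}).toReal := by
        have h2 := ENNReal.toReal_mono (hne τ) (hlower hτpos)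
        rwa [ENNReal.toReal_ofReal hβ0.le] at h2
      rw [hsstar_int]
      linarith
  linarith [hexpand ▸ hg_int]
end

section
/- Define the 0-1 ask-loss L(f, g, s; x, h, y) = 1{f(x) ≠ y}·1{s(x)=0} + 1{g(x,h) ≠ y}·1{s(x)=1} and the surrogate L̃(f̃, g̃, s̃; x, h, y) = ℓ(p_f)·ℓs(−s̃(x)) + ℓ(p_g)·ℓs(s̃(x)), where p_f, p_g are the true-class softmax probabilities of the logits f̃(x), g̃(x,h), s(x) = 1{s̃(x) > 0}, ℓ : [0,1] → [0,1] is non-increasing with ℓ(2/3) > 0, and ℓs : ℝ → [0,1] is monotone with ℓs(v) + ℓs(−v) = 1. Then for every (x, h, y) and every f, g, s: L(f, g, s; x, h, y) ≤ L̃(f̃, g̃, s̃; x, h, y) / ((1/2)·ℓ(2/3)). -/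
/-- The softmax probability of class `y` for a logit vector `t`. -/
noncomputable def softmax {Y : Type*} [Fintype Y] (t : Y → ℝ) (y : Y) : ℝ :=
  Real.exp (t y) / ∑ y' : Y, Real.exp (t y')

lemma softmax_mem {Y : Type*} [Fintype Y] (t : Y → ℝ) (y : Y) :
    softmax t y ∈ Set.Icc (0 : ℝ) 1 := by
  have hpos : 0 < ∑ y' : Y, Real.exp (t y') :=
    Finset.sum_pos (fun i _ => Real.exp_pos _) ⟨y, Finset.mem_univ y⟩
  constructor
  · exact div_nonneg (Real.exp_pos _).le hpos.le
  · rw [softmax, div_le_one hpos]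
    exact Finset.single_le_sum (fun i _ => (Real.exp_pos _).le) (Finset.mem_univ y)

lemma softmax_le_half {Y : Type*} [Fintype Y] [DecidableEq Y] (t : Y → ℝ) (y ym : Y)
    (hne : ym ≠ y) (hmax : ∀ y', t y' ≤ t ym) : softmax t y ≤ 1 / 2 := by
  have hpos : 0 < ∑ y' : Y, Real.exp (t y') :=
    Finset.sum_pos (fun i _ => Real.exp_pos _) ⟨y, Finset.mem_univ y⟩
  rw [softmax, div_le_div_iff₀ hpos (by norm_num)]
  have hsub : Real.exp (t y) + Real.exp (t ym) ≤ ∑ y' : Y, Real.exp (t y') := by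
    have : ({y, ym} : Finset Y) ⊆ Finset.univ := Finset.subset_univ _
    calc Real.exp (t y) + Real.exp (t ym) = ∑ y' ∈ ({y, ym} : Finset Y), Real.exp (t y') := by
          rw [Finset.sum_pair (Ne.symm hne)]
      _ ≤ _ := Finset.sum_le_sum_of_subset_of_nonneg this
          (fun i _ _ => (Real.exp_pos _).le)
  have hle : Real.exp (t y) ≤ Real.exp (t ym) := Real.exp_le_exp.mpr (hmax y)
  nlinarith

/-- Pointwise upper-bound lemma in the proof of Theorem 2 (all six cases):
the normalized surrogate ask-loss uniformly upper bounds the 0-1 ask-loss.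
Predictions `f x`, `g x h` are argmaxes of the logits `ft x`, `gt x h`, and the
selector is `s(x) = 1{s̃(x) > 0}`. -/
theorem surrogate_upper_bounds_ask_loss
    {X H : Type*} {Y : Type*} [Fintype Y] [DecidableEq Y] (hY : 2 ≤ Fintype.card Y)
    (ft : X → Y → ℝ) (gt : X → H → Y → ℝ) (st : X → ℝ)
    (f : X → Y) (g : X → H → Y)
    (hf_argmax : ∀ x : X, ∀ y' : Y, ft x y' ≤ ft x (f x))
    (hg_argmax : ∀ (x : X) (h : H), ∀ y' : Y, gt x h y' ≤ gt x h (g x h))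
    (l : ℝ → ℝ) (hl_anti : AntitoneOn l (Set.Icc (0 : ℝ) 1))
    (hl_range : ∀ p ∈ Set.Icc (0 : ℝ) 1, l p ∈ Set.Icc (0 : ℝ) 1)
    (hl23 : 0 < l (2 / 3))
    (ls : ℝ → ℝ) (hls_range : ∀ v : ℝ, ls v ∈ Set.Icc (0 : ℝ) 1)
    (hls_mono : Monotone ls)
    (hls_sym : ∀ v : ℝ, ls v + ls (-v) = 1) :
    ∀ (x : X) (h : H) (y : Y),
      (if f x ≠ y then (1 : ℝ) else 0) * (if st x > 0 then (0 : ℝ) else 1)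
        + (if g x h ≠ y then (1 : ℝ) else 0) * (if st x > 0 then (1 : ℝ) else 0)
      ≤ (l (softmax (ft x) y) * ls (-(st x)) + l (softmax (gt x h) y) * ls (st x))
          / ((1 / 2) * l (2 / 3)) := by
  intro x h y
  have hc : (0 : ℝ) < (1 / 2) * l (2 / 3) := by positivity
  have hmemf := softmax_mem (ft x) y
  have hmemg := softmax_mem (gt x h) y
  have h23 : (2 / 3 : ℝ) ∈ Set.Icc (0 : ℝ) 1 := by norm_num
  have hlf0 : 0 ≤ l (softmax (ft x) y) := (hl_range _ hmemf).1
  have hlg0 : 0 ≤ l (softmax (gt x h) y) := (hl_range _ hmemg).1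
  have hlsn0 : 0 ≤ ls (-(st x)) := (hls_range _).1
  have hlsp0 : 0 ≤ ls (st x) := (hls_range _).1
  have hnum0 : 0 ≤ l (softmax (ft x) y) * ls (-(st x)) + l (softmax (gt x h) y) * ls (st x) :=
    add_nonneg (mul_nonneg hlf0 hlsn0) (mul_nonneg hlg0 hlsp0)
  -- key bounds when misclassified
  have keyf : f x ≠ y → l (2 / 3) ≤ l (softmax (ft x) y) := by
    intro hne
    have hle : softmax (ft x) y ≤ 1 / 2 := softmax_le_half _ y (f x) hne (hf_argmax x)
    exact hl_anti hmemf h23 (by linarith)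
  have keyg : g x h ≠ y → l (2 / 3) ≤ l (softmax (gt x h) y) := by
    intro hne
    have hle : softmax (gt x h) y ≤ 1 / 2 := softmax_le_half _ y (g x h) hne (hg_argmax x h)
    exact hl_anti hmemg h23 (by linarith)
  rw [le_div_iff₀ hc]
  by_cases hs : st x > 0
  · rw [if_pos hs, if_pos hs]
    by_cases hg : g x h ≠ y
    · have h1 : (1 : ℝ) / 2 ≤ ls (st x) := by
        have := hls_sym (st x)
        have hmono : ls (-(st x)) ≤ ls (st x) := hls_mono (by linarith)
        linarith
      have h2 := keyg hg
      rw [if_pos hg]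
      have hb : (1 / 2) * l (2 / 3) ≤ l (softmax (gt x h) y) * ls (st x) := by nlinarith
      nlinarith [mul_nonneg hlf0 hlsn0]
    · rw [if_neg hg]
      nlinarith
  · rw [if_neg hs, if_neg hs]
    by_cases hf : f x ≠ y
    · have h1 : (1 : ℝ) / 2 ≤ ls (-(st x)) := by
        have := hls_sym (st x)
        have hmono : ls (st x) ≤ ls (-(st x)) := hls_mono (by push_neg at hs; linarith)
        linarith
      have h2 := keyf hf
      rw [if_pos hf]
      have hb : (1 / 2) * l (2 / 3) ≤ l (softmax (ft x) y) * ls (-(st x)) := by nlinarith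
      nlinarith [mul_nonneg hlg0 hlsp0]
    · rw [if_neg hf]
      nlinarith
end
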